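/- Let R be a commutative ring, let n, m ≥ 0, and let y_1, …, y_n, z_1, …, z_m ∈ R. Then Σ_{k+l=n, k,l ≥ 0} (−1)^l · S_k(y_1,…,y_n,z_1,…,z_m) · H_l(z_1,…,z_m) = S_n(y_1,…,y_n) = y_1 y_2 ⋯ y_n. -/

import Mathlib

/-- The `l`-th complete homogeneous symmetric polynomial of the elements
`y 0, …, y (m-1)`. -/
noncomputable def hsymm {R : Type*} [CommRing R] {m : ℕ} (y : Fin m → R) (l : ℕ) : R :=
  ∑ t : Sym (Fin m) l, ((t : Multiset (Fin m)).map y).prod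

section Aux

open PowerSeries Finset

variable {R : Type*} [CommRing R]

lemma esymm_cons (a : R) (s : Multiset R) (d : ℕ) :
    (a ::ₘ s).esymm (d + 1) = s.esymm (d + 1) + a * s.esymm d := by
  simp only [Multiset.esymm, Multiset.powersetCard_cons, Multiset.map_add, Multiset.sum_add,
    Multiset.map_map, Function.comp_def, Multiset.prod_cons]
  rw [← Multiset.sum_map_mul_left]

lemma esymm_zero_succ (d : ℕ) : (0 : Multiset R).esymm (d + 1) = 0 := by
  simp [Multiset.esymm, Multiset.powersetCard_zero_right]

lemma coeff_prod_one_add (s : Multiset R) (d : ℕ) :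
    PowerSeries.coeff d ((s.map fun a => 1 + PowerSeries.C a * X).prod) = s.esymm d := by
  induction s using Multiset.induction_on generalizing d with
  | empty =>
    cases d with
    | zero => simp [Multiset.esymm]
    | succ d => simp [esymm_zero_succ, PowerSeries.coeff_one]
  | cons a s ih =>
    rw [Multiset.map_cons, Multiset.prod_cons]
    cases d with
    | zero =>
      simp only [PowerSeries.coeff_zero_eq_constantCoeff, map_mul]
      simp [Multiset.esymm, ← PowerSeries.coeff_zero_eq_constantCoeff, ih]

    | succ d =>
      rw [add_mul, one_mul, mul_assoc, map_add, PowerSeries.coeff_C_mul,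
        PowerSeries.coeff_succ_X_mul, ih, ih, esymm_cons]

lemma geom_inv (a : R) :
    ((1 : R⟦X⟧) + PowerSeries.C a * X) * PowerSeries.mk (fun j => (-a)^j) = 1 := by
  ext n
  rw [add_mul, one_mul, mul_assoc, map_add, PowerSeries.coeff_C_mul]
  cases n with
  | zero => simp
  | succ n =>
    rw [PowerSeries.coeff_succ_X_mul, PowerSeries.coeff_mk, PowerSeries.coeff_mk]
    simp [pow_succ, PowerSeries.coeff_one]
    ring

lemma prod_map_eq_prod_count {m : ℕ} (z : Fin m → R) (s : Multiset (Fin m)) :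
    (s.map z).prod = ∏ i, z i ^ s.count i := by
  induction s using Multiset.induction_on with
  | empty => simp
  | cons a s ih =>
    simp only [Multiset.map_cons, Multiset.prod_cons, ih, Multiset.count_cons, pow_add,
      Finset.prod_mul_distrib]
    have : ∀ x : Fin m, z x ^ (if x = a then 1 else 0) = if x = a then z x else 1 := by
      intro x; split <;> simp
    simp only [this, Finset.prod_ite_eq' Finset.univ a z, Finset.mem_univ, if_true]
    ring

lemma hsymm_eq_sum_finsuppAntidiag {m : ℕ} (z : Fin m → R) (d : ℕ) :
    hsymm z d = ∑ l ∈ Finset.finsuppAntidiag (Finset.univ : Finset (Fin m)) d, ∏ i, z i ^ l i := by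
  have hsum : ∀ (f : Fin m →₀ ℕ), (Finset.univ : Finset (Fin m)).sum ⇑f = f.sum fun _ n => n :=
    fun f => (Finsupp.sum_fintype f (fun _ n => n) (fun _ => rfl)).symm
  rw [hsymm]
  refine Finset.sum_bij' (fun t _ => Multiset.toFinsupp (t : Multiset (Fin m)))
    (fun l hl => ⟨Finsupp.toMultiset l, by
      rw [Finsupp.card_toMultiset]
      rw [Finset.mem_finsuppAntidiag] at hl
      rw [← hl.1, hsum]; rfl⟩)
    ?_ ?_ ?_ ?_ ?_
  · intro t _
    simp only [Finset.mem_finsuppAntidiag]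
    refine ⟨?_, Finset.subset_univ _⟩
    rw [hsum]
    exact (Multiset.toFinsupp_sum_eq _).trans t.prop
  · intro l _; exact Finset.mem_univ _
  · intro t _
    ext1
    simp
  · intro l _
    simp
  · intro t _
    rw [prod_map_eq_prod_count]
    simp

lemma mk_neg_hsymm_eq {m : ℕ} (z : Fin m → R) :
    PowerSeries.mk (fun l => (-1 : R)^l * hsymm z l) =
      ∏ i : Fin m, PowerSeries.mk (fun j => (-z i)^j) := by
  ext d
  rw [PowerSeries.coeff_mk, PowerSeries.coeff_prod, hsymm_eq_sum_finsuppAntidiag,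
    Finset.mul_sum]
  refine Finset.sum_congr rfl fun l hl => ?_
  simp only [PowerSeries.coeff_mk]
  have : ∀ i : Fin m, (-z i) ^ l i = (-1 : R) ^ l i * z i ^ l i := fun i => neg_pow _ _
  rw [Finset.prod_congr rfl fun i _ => this i, Finset.prod_mul_distrib,
    Finset.prod_pow_eq_pow_sum]
  rw [Finset.mem_finsuppAntidiag] at hl
  rw [hl.1]

lemma G_mul_H {m : ℕ} (z : Fin m → R) :
    (∏ i : Fin m, ((1 : R⟦X⟧) + PowerSeries.C (z i) * X)) *
      PowerSeries.mk (fun l => (-1 : R)^l * hsymm z l) = 1 := by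
  rw [mk_neg_hsymm_eq, ← Finset.prod_mul_distrib]
  simp only [geom_inv, Finset.prod_const_one]

lemma esymm_eq_zero_of_card_lt (s : Multiset R) {k : ℕ} (h : Multiset.card s < k) :
    s.esymm k = 0 := by
  rw [Multiset.esymm, Multiset.powersetCard_eq_empty _ h]
  simp

lemma esymm_card_eq_prod (s : Multiset R) : s.esymm (Multiset.card s) = s.prod := by
  induction s using Multiset.induction_on with
  | empty => simp [Multiset.esymm]
  | cons a s ih =>
    rw [Multiset.card_cons, esymm_cons, esymm_eq_zero_of_card_lt s (Nat.lt_succ_self _), ih,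
      Multiset.prod_cons, zero_add]


end Aux

open PowerSeries in
/-- Lemma 5.4:
`Σ_{k+l=n} (−1)^l S_k(y_1,…,y_n,z_1,…,z_m) H_l(z_1,…,z_m) = S_n(y_1,…,y_n) = y_1 ⋯ y_n`. -/
theorem sum_alternating_esymm_append_mul_hsymm
    {R : Type*} [CommRing R] (n m : ℕ) (y : Fin n → R) (z : Fin m → R) :
    (∑ l ∈ Finset.range (n + 1),
        (-1 : R) ^ l *
          ((↑(List.ofFn y) + ↑(List.ofFn z) : Multiset R).esymm (n - l)) * hsymm z l)
        = (↑(List.ofFn y) : Multiset R).esymm n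
      ∧ (↑(List.ofFn y) : Multiset R).esymm n = ∏ i, y i := by
  classical
  set Y : Multiset R := ↑(List.ofFn y) with hYdef
  set Z : Multiset R := ↑(List.ofFn z) with hZdef
  have hcard : Multiset.card Y = n := by simp [hYdef]
  have part2 : Y.esymm n = ∏ i, y i := by
    have h := esymm_card_eq_prod Y
    rw [hcard] at h
    rw [h, hYdef, Multiset.prod_coe, List.prod_ofFn]
  refine ⟨?_, part2⟩
  set F : R⟦X⟧ := (Y.map fun a => 1 + PowerSeries.C a * X).prod with hF
  set G : R⟦X⟧ := (Z.map fun a => 1 + PowerSeries.C a * X).prod with hG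
  set Hm : R⟦X⟧ := PowerSeries.mk (fun l => (-1 : R)^l * hsymm z l) with hHm
  have hGprod : G = ∏ i : Fin m, ((1 : R⟦X⟧) + PowerSeries.C (z i) * X) := by
    rw [hG, hZdef, Multiset.map_coe, List.map_ofFn, Multiset.prod_coe, List.prod_ofFn]
    rfl
  have key : F * G * Hm = F := by
    rw [mul_assoc, hGprod, hHm, G_mul_H, mul_one]
  calc ∑ l ∈ Finset.range (n + 1), (-1 : R) ^ l * ((Y + Z).esymm (n - l)) * hsymm z l
      = ∑ l ∈ Finset.range (n + 1),
          (PowerSeries.coeff (n - l) (F * G)) * PowerSeries.coeff l Hm := by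
        refine Finset.sum_congr rfl fun l _ => ?_
        have hFG : F * G = (((Y + Z)).map fun a => 1 + PowerSeries.C a * X).prod := by
          rw [Multiset.map_add, Multiset.prod_add]
        rw [hFG, coeff_prod_one_add, hHm, PowerSeries.coeff_mk]
        ring
    _ = PowerSeries.coeff n (F * G * Hm) := by
        rw [PowerSeries.coeff_mul, ← Finset.Nat.sum_antidiagonal_swap,
          Finset.Nat.sum_antidiagonal_eq_sum_range_succ_mk]
        rfl
    _ = Y.esymm n := by rw [key, hF, coeff_prod_one_add]
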